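/- For a history h of an iCGS M starting at s_I, if every infinite extension of the labelling trace of h satisfies LTL path formula ψ, then there exists a uniform joint strategy σ_Ag for the grand coalition whose unique compatible path from s_I has h as a prefix, and hence M, s_I ⊨ ⟪Ag⟫ψ. -/

import Mathlib

/-- Syntax of LTL formulas over atomic propositions `AP`. -/
inductive LTL (AP : Type) where
  | atom : AP → LTL AP
  | neg  : LTL AP → LTL AP
  | conj : LTL AP → LTL AP → LTL AP
  | next : LTL AP → LTL AP
  | untl : LTL AP → LTL AP → LTL AP

/-- Standard LTL semantics over infinite traces `ρ : ℕ → Set AP` (0-indexed). -/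
def LTL.Sat {AP : Type} : (ℕ → Set AP) → LTL AP → Prop
  | ρ, .atom q => q ∈ ρ 0
  | ρ, .neg ψ => ¬ LTL.Sat ρ ψ
  | ρ, .conj ψ ψ' => LTL.Sat ρ ψ ∧ LTL.Sat ρ ψ'
  | ρ, .next ψ => LTL.Sat (fun n => ρ (n + 1)) ψ
  | ρ, .untl ψ ψ' => ∃ k, LTL.Sat (fun n => ρ (n + k)) ψ' ∧
      ∀ j < k, LTL.Sat (fun n => ρ (n + j)) ψ

/-- Concatenation of a finite trace with an infinite trace. -/
def ext {AP : Type} (ρ : List (Set AP)) (ρ' : ℕ → Set AP) : ℕ → Set AP :=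
  fun n => if h : n < ρ.length then ρ.get ⟨n, h⟩ else ρ' (n - ρ.length)

/-- The three monitor verdicts. -/
inductive Verdict where
  | top | bot | unknown
deriving DecidableEq

-- The LTL monitor: ⊤ if all infinite extensions satisfy ψ, ⊥ if all violate ψ, ? otherwise.
open Classical in
noncomputable def Mon {AP : Type} (ψ : LTL AP) (ρ : List (Set AP)) : Verdict :=
  if ∀ ρ' : ℕ → Set AP, LTL.Sat (ext ρ ρ') ψ then Verdict.top
  else if ∀ ρ' : ℕ → Set AP, ¬ LTL.Sat (ext ρ ρ') ψ then Verdict.bot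
  else Verdict.unknown
/-- A concurrent game structure (with imperfect information), without bundled
well-formedness conditions. -/
structure CGS (Agt S AP Act : Type) where
  init : S
  indist : Agt → S → S → Prop
  protocol : Agt → S → Set Act
  trans : S → (Agt → Act) → S
  label : S → Set AP

/-- Well-formedness: protocols are nonempty and invariant under indistinguishability.
(The transition function is total by typing.) -/
def CGS.WellFormed {Agt S AP Act : Type} (M : CGS Agt S AP Act) : Prop :=
  (∀ i s, (M.protocol i s).Nonempty) ∧
  (∀ i s s', M.indist i s s' → M.protocol i s = M.protocol i s')

/-- Uniform strategy for agent `i`: returns enabled actions at the last state of a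
history, and agrees on (synchronously, pointwise) indistinguishable histories. -/
def CGS.UniformStrategy {Agt S AP Act : Type} (M : CGS Agt S AP Act) (i : Agt)
    (σ : List S → Act) : Prop :=
  (∀ (h : List S) (hne : h ≠ []), σ h ∈ M.protocol i (h.getLast hne)) ∧
  (∀ h h' : List S, List.Forall₂ (M.indist i) h h' → σ h = σ h')

/-- `out(s, σ_Γ)`: the σ_Γ-compatible infinite paths from `s`. -/
def CGS.outSet {Agt S AP Act : Type} (M : CGS Agt S AP Act) (Γ : Set Agt)
    (σ : Agt → List S → Act) (s : S) : Set (ℕ → S) :=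
  { p | p 0 = s ∧ ∀ j : ℕ, ∃ a : Agt → Act,
      (∀ i, a i ∈ M.protocol i (p j)) ∧
      (∀ i ∈ Γ, a i = σ i ((List.range (j + 1)).map p)) ∧
      p (j + 1) = M.trans (p j) a }

/-- `M, s ⊨ ⟪Γ⟫ψ` for an LTL path formula `ψ` read on labelling traces. -/
def CGS.SatATL {Agt S AP Act : Type} (M : CGS Agt S AP Act) (s : S) (Γ : Set Agt)
    (ψ : LTL AP) : Prop :=
  ∃ σ : Agt → List S → Act, (∀ i ∈ Γ, M.UniformStrategy i (σ i)) ∧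
    ∀ p ∈ M.outSet Γ σ s, LTL.Sat (fun n => M.label (p n)) ψ

/-- Infinite path of `M` from `s` (each step via some enabled joint action). -/
def CGS.IsPath {Agt S AP Act : Type} (M : CGS Agt S AP Act) (s : S) (p : ℕ → S) : Prop :=
  p 0 = s ∧ ∀ j : ℕ, ∃ a : Agt → Act,
    (∀ i, a i ∈ M.protocol i (p j)) ∧ p (j + 1) = M.trans (p j) a

/-- History: finite nonempty path of `M` starting at `s`. -/
def CGS.IsHistory {Agt S AP Act : Type} (M : CGS Agt S AP Act) (s : S) (h : List S) : Prop :=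
  h.head? = some s ∧ ∀ j : ℕ, (hj : j + 1 < h.length) → ∃ a : Agt → Act,
    (∀ i, a i ∈ M.protocol i (h.get ⟨j, Nat.lt_of_succ_lt hj⟩)) ∧
    h.get ⟨j + 1, hj⟩ = M.trans (h.get ⟨j, Nat.lt_of_succ_lt hj⟩) a


/-- if every infinite extension of the labelling trace of a history h
satisfies ψ, then there is a uniform joint strategy for the grand coalition whose
compatible paths from s_I have h as a prefix, and hence M, s_I ⊨ ⟪Ag⟫ψ. -/
theorem stmt_10 {Agt S AP Act : Type} (M : CGS Agt S AP Act) (hwf : M.WellFormed)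
    (heq : ∀ i, Equivalence (M.indist i)) (ψ : LTL AP) (h : List S)
    (hh : M.IsHistory M.init h)
    (hext : ∀ ρ' : ℕ → Set AP, LTL.Sat (ext (h.map M.label) ρ') ψ) :
    (∃ σ : Agt → List S → Act, (∀ i, M.UniformStrategy i (σ i)) ∧
      ∀ p ∈ M.outSet (Set.univ : Set Agt) σ M.init,
        ∀ (j : ℕ) (hj : j < h.length), p j = h.get ⟨j, hj⟩) ∧
    M.SatATL M.init (Set.univ : Set Agt) ψ := by
  classical
  obtain ⟨hwf1, hwf2⟩ := hwf
  obtain ⟨hhead, hstep⟩ := hh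
  have hne : h ≠ [] := by intro e; rw [e] at hhead; simp at hhead
  have hlen : 0 < h.length := List.length_pos_iff.2 hne
  have hget0 : h.get ⟨0, hlen⟩ = M.init := by
    cases h with
    | nil => exact absurd rfl hne
    | cons a t => simpa using hhead
  -- pick an enabled action uniformly
  set pick : Agt → S → Act := fun i s =>
    if hA : (M.protocol i s).Nonempty then hA.some else (hwf1 i M.init).some with hpickdef
  have pick_mem : ∀ i s, pick i s ∈ M.protocol i s := by
    intro i s
    simp only [hpickdef, dif_pos (hwf1 i s)]
    exact (hwf1 i s).some_mem
  have pick_eq : ∀ i s s', M.indist i s s' → pick i s = pick i s' := by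
    intro i s s' hss
    simp only [hpickdef, hwf2 i s s' hss]
  -- the joint actions along h
  set Aj : ℕ → Agt → Act := fun j =>
    if hj : j + 1 < h.length then (hstep j hj).choose else fun i => pick i M.init
    with hAjdef
  have Aj_mem : ∀ j (hj : j + 1 < h.length) i,
      Aj j i ∈ M.protocol i (h.get ⟨j, Nat.lt_of_succ_lt hj⟩) := by
    intro j hj i
    simp only [hAjdef, dif_pos hj]
    exact (hstep j hj).choose_spec.1 i
  have Aj_trans : ∀ j (hj : j + 1 < h.length),
      h.get ⟨j + 1, hj⟩ = M.trans (h.get ⟨j, Nat.lt_of_succ_lt hj⟩) (Aj j) := by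
    intro j hj
    simp only [hAjdef, dif_pos hj]
    exact (hstep j hj).choose_spec.2
  -- the strategy
  set σ : Agt → List S → Act := fun i hist =>
    if hist ≠ [] ∧ hist.length < h.length ∧
        M.indist i (hist.getLastD M.init) (h.getD (hist.length - 1) M.init)
    then Aj (hist.length - 1) i
    else pick i (hist.getLastD M.init) with hσdef
  have getD_eq : ∀ (j : ℕ) (hj : j < h.length), h.getD j M.init = h.get ⟨j, hj⟩ := by
    intro j hj
    simp [List.getD_eq_getElem?_getD, List.getElem?_eq_getElem hj]
  have gld : ∀ (l : List S) (hn : l ≠ []), l.getLastD M.init = l.getLast hn := by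
    intro l hn
    cases l with
    | nil => exact absurd rfl hn
    | cons a t => rw [List.getLast_eq_getLastD, List.getLastD_cons]
  have flast : ∀ (i : Agt) (l₁ l₂ : List S), List.Forall₂ (M.indist i) l₁ l₂ →
      ∀ (h1 : l₁ ≠ []) (h2 : l₂ ≠ []), M.indist i (l₁.getLast h1) (l₂.getLast h2) := by
    intro i l₁ l₂ hf h1 h2
    rw [List.getLast_eq_getElem, List.getLast_eq_getElem]
    have hl := hf.length_eq
    have := (List.forall₂_iff_get.1 hf).2 (l₁.length - 1)
      (by have := List.length_pos_iff.2 h1; omega)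
      (by have := List.length_pos_iff.2 h2; omega)
    simpa [hl] using this
  have hσuni : ∀ i, M.UniformStrategy i (σ i) := by
    intro i
    constructor
    · intro hist hne'
      have hlast : hist.getLastD M.init = hist.getLast hne' := gld hist hne'
      by_cases hc : hist ≠ [] ∧ hist.length < h.length ∧
          M.indist i (hist.getLastD M.init) (h.getD (hist.length - 1) M.init)
      · simp only [hσdef, if_pos hc]
        obtain ⟨-, hlt, hind⟩ := hc
        have h1 : 0 < hist.length := List.length_pos_iff.2 hne'
        have hj : hist.length - 1 + 1 < h.length := by omega
        have hm := Aj_mem (hist.length - 1) hj i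
        rw [getD_eq (hist.length - 1) (Nat.lt_of_succ_lt hj)] at hind
        rw [hwf2 i _ _ ((heq i).symm hind)] at hm
        rwa [hlast] at hm
      · simp only [hσdef, if_neg hc]
        rw [hlast]; exact pick_mem i _
    · intro l₁ l₂ hf
      have hl12 : l₁.length = l₂.length := hf.length_eq
      rcases eq_or_ne l₁ [] with rfl | hne1
      · cases hf; rfl
      · have hne2 : l₂ ≠ [] := by
          intro e; rw [e] at hl12; simp at hl12
          exact hne1 hl12
        have hind : M.indist i (l₁.getLastD M.init) (l₂.getLastD M.init) := by
          rw [gld _ hne1, gld _ hne2]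
          exact flast i l₁ l₂ hf hne1 hne2
        have hciff : (l₁ ≠ [] ∧ l₁.length < h.length ∧
              M.indist i (l₁.getLastD M.init) (h.getD (l₁.length - 1) M.init)) ↔
            (l₂ ≠ [] ∧ l₂.length < h.length ∧
              M.indist i (l₂.getLastD M.init) (h.getD (l₂.length - 1) M.init)) := by
          rw [hl12]
          constructor
          · rintro ⟨-, hlt, hi⟩
            exact ⟨hne2, hlt, (heq i).trans ((heq i).symm hind) hi⟩
          · rintro ⟨-, hlt, hi⟩
            exact ⟨hne1, hlt, (heq i).trans hind hi⟩
        by_cases hc : l₁ ≠ [] ∧ l₁.length < h.length ∧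
            M.indist i (l₁.getLastD M.init) (h.getD (l₁.length - 1) M.init)
        · simp only [hσdef, if_pos hc, if_pos (hciff.1 hc), hl12]
        · simp only [hσdef, if_neg hc, if_neg (fun hc2 => hc (hciff.2 hc2))]
          exact pick_eq i _ _ hind
  -- key: compatible paths follow h
  have key : ∀ p ∈ M.outSet (Set.univ : Set Agt) σ M.init,
      ∀ (j : ℕ) (hj : j < h.length), p j = h.get ⟨j, hj⟩ := by
    intro p hp
    intro j
    induction j with
    | zero => intro hj; rw [hp.1, hget0]
    | succ j ih =>
      intro hj
      have hjlt : j < h.length := Nat.lt_of_succ_lt hj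
      have hpj : p j = h.get ⟨j, hjlt⟩ := ih hjlt
      obtain ⟨a, hamem, haeq, htr⟩ := hp.2 j
      set hist : List S := (List.range (j + 1)).map p with hhist
      have hhne : hist ≠ [] := by simp [hhist]
      have hhlen : hist.length = j + 1 := by simp [hhist]
      have hhlast : hist.getLastD M.init = p j := by
        rw [gld _ hhne, List.getLast_eq_getElem]
        simp [hhist]
      have hcond : ∀ i : Agt, (hist ≠ [] ∧ hist.length < h.length ∧
          M.indist i (hist.getLastD M.init) (h.getD (hist.length - 1) M.init)) := by
        intro i
        refine ⟨hhne, by omega, ?_⟩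
        rw [hhlast, hhlen]
        simp only [Nat.add_sub_cancel]
        rw [getD_eq j hjlt, hpj]
        exact (heq i).refl _
      have haAj : a = Aj j := by
        funext i
        have := haeq i (Set.mem_univ i)
        rw [this]
        simp only [hσdef, if_pos (hcond i), hhlen, Nat.add_sub_cancel]
      rw [htr, haAj, hpj]
      exact (Aj_trans j hj).symm
  refine ⟨⟨σ, hσuni, key⟩, σ, fun i _ => hσuni i, ?_⟩
  intro p hp
  have htrace : (fun n => M.label (p n)) =
      ext (h.map M.label) (fun n => M.label (p (n + h.length))) := by
    funext n
    unfold ext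
    by_cases hn : n < (h.map M.label).length
    · rw [dif_pos hn]
      have hn' : n < h.length := by simpa using hn
      rw [List.get_eq_getElem, List.getElem_map]
      congr 1
      exact (key p hp n (by simpa using hn')).symm ▸ rfl
    · rw [dif_neg hn]
      have hn' : ¬ n < h.length := by simpa using hn
      have hnn : n - (List.map M.label h).length + h.length = n := by
        simp only [List.length_map]; omega
      show M.label (p n) = M.label (p (n - (List.map M.label h).length + h.length))
      rw [hnn]
  rw [htrace]
  exact hext _
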